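/- Assume there exists i₀ ∈ {−1,0,1} such that |a_{i₀}(ζ)| < a_{i₀}(1) for every ζ ∈ ℂ with |ζ| = 1 and ζ ≠ 1. Then for every ζ ∈ ℂ with |ζ| = 1 and ζ ≠ 1: the equation a_1(ζ)λ² + (a_0(ζ)−1)λ + a_{−1}(ζ) = 0 has no solution λ with |λ| = 1; it has exactly one solution λ with |λ| < 1; and if a_1(ζ) ≠ 0, it also has a solution with |λ| > 1. -/

import Mathlib

open Filter Topology

/- Convention: the transition probabilities a_{i,j} (i,j ∈ {−1,0,1}) are encoded
as `v : Fin 3 → Fin 3 → ℝ`, where the index `0, 1, 2` corresponds to `−1, 0, 1`. -/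

/-- `symb v i z = a_i(z) = a_{i,−1} z⁻¹ + a_{i,0} + a_{i,1} z`. -/
noncomputable def symb (v : Fin 3 → Fin 3 → ℝ) (i : Fin 3) (z : ℂ) : ℂ :=
  (v i 0 : ℂ) * z⁻¹ + (v i 1 : ℂ) + (v i 2 : ℂ) * z

/-- `symbOne v i = a_i(1) = a_{i,−1} + a_{i,0} + a_{i,1}` (as a real number). -/
def symbOne (v : Fin 3 → Fin 3 → ℝ) (i : Fin 3) : ℝ := v i 0 + v i 1 + v i 2

/-- The fixed-point iteration θ_0 = 0, θ_{k+1} = a_{−1}(ζ) + a_0(ζ) θ_k + a_1(ζ) θ_k². -/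
noncomputable def quadIter (am1 a0 a1 : ℂ) : ℕ → ℂ
  | 0 => 0
  | k + 1 => am1 + a0 * quadIter am1 a0 a1 k + a1 * (quadIter am1 a0 a1 k) ^ 2

/- STATEMENT 15: if |a_{i₀}(ζ)| < a_{i₀}(1) for some i₀ ∈ {−1,0,1} and all ζ ≠ 1
on the unit circle, then for every such ζ the quadratic
a_1(ζ)λ² + (a_0(ζ)−1)λ + a_{−1}(ζ) = 0 has no solution of modulus 1, exactly one
solution of modulus < 1, and (if a_1(ζ) ≠ 0) a solution of modulus > 1. -/

theorem stmt15 (v : Fin 3 → Fin 3 → ℝ) (hnn : ∀ i j, 0 ≤ v i j)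
    (hsum : ∑ i, ∑ j, v i j = 1)
    (hstrict : ∃ i₀ : Fin 3, ∀ ζ : ℂ, ‖ζ‖ = 1 → ζ ≠ 1 →
      ‖symb v i₀ ζ‖ < symbOne v i₀) :
    ∀ ζ : ℂ, ‖ζ‖ = 1 → ζ ≠ 1 →
      (∀ lam : ℂ,
        symb v 2 ζ * lam ^ 2 + (symb v 1 ζ - 1) * lam + symb v 0 ζ = 0 →
        ‖lam‖ ≠ 1) ∧
      (∃! lam : ℂ,
        symb v 2 ζ * lam ^ 2 + (symb v 1 ζ - 1) * lam + symb v 0 ζ = 0 ∧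
        ‖lam‖ < 1) ∧
      (symb v 2 ζ ≠ 0 → ∃ lam : ℂ,
        symb v 2 ζ * lam ^ 2 + (symb v 1 ζ - 1) * lam + symb v 0 ζ = 0 ∧
        1 < ‖lam‖) := by
  obtain ⟨i₀, hi₀⟩ := hstrict
  intro ζ hζ hζ1
  have hi := hi₀ ζ hζ hζ1
  have habs : ∀ i, ‖symb v i ζ‖ ≤ symbOne v i := by
    intro i
    have h0 : ‖(v i 0 : ℂ) * ζ⁻¹‖ = v i 0 := by
      rw [norm_mul, norm_inv, hζ, Complex.norm_real, Real.norm_of_nonneg (hnn i 0)]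
      norm_num
    have h1 : ‖(v i 1 : ℂ)‖ = v i 1 := by
      rw [Complex.norm_real, Real.norm_of_nonneg (hnn i 1)]
    have h2 : ‖(v i 2 : ℂ) * ζ‖ = v i 2 := by
      rw [norm_mul, hζ, Complex.norm_real, Real.norm_of_nonneg (hnn i 2), mul_one]
    calc ‖symb v i ζ‖
        ≤ ‖(v i 0 : ℂ) * ζ⁻¹‖ + ‖(v i 1 : ℂ)‖
            + ‖(v i 2 : ℂ) * ζ‖ :=
          (norm_add_le _ _).trans (add_le_add_left (norm_add_le _ _) _)
      _ = symbOne v i := by rw [h0, h1, h2]; rfl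
  set A0 := symb v 0 ζ with hA0d
  set A1 := symb v 1 ζ with hA1d
  set A2 := symb v 2 ζ with hA2d
  have hsum3 : symbOne v 0 + symbOne v 1 + symbOne v 2 = 1 := by
    simp only [Fin.sum_univ_three] at hsum
    simp only [symbOne]; linarith
  have key : ‖A0‖ + ‖A1‖ + ‖A2‖ < 1 := by
    have h0 := habs 0; have h1 := habs 1; have h2 := habs 2
    fin_cases i₀
    · rw [hA0d, hA1d, hA2d]
      linarith [show ‖symb v 0 ζ‖ < symbOne v 0 from hi, h1, h2]
    · rw [hA0d, hA1d, hA2d]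
      linarith [show ‖symb v 1 ζ‖ < symbOne v 1 from hi, h0, h2]
    · rw [hA0d, hA1d, hA2d]
      linarith [show ‖symb v 2 ζ‖ < symbOne v 2 from hi, h0, h1]
  have hcirc : ∀ lam : ℂ, A2 * lam ^ 2 + (A1 - 1) * lam + A0 = 0 →
      ‖lam‖ ≠ 1 := by
    intro lam hroot h1
    have hlam : lam = A0 + A1 * lam + A2 * lam ^ 2 := by linear_combination -hroot
    have hone : (1 : ℝ) = ‖A0 + A1 * lam + A2 * lam ^ 2‖ := by
      rw [← hlam, h1]
    have hle : ‖A0 + A1 * lam + A2 * lam ^ 2‖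
        ≤ ‖A0‖ + ‖A1‖ + ‖A2‖ := by
      calc ‖A0 + A1 * lam + A2 * lam ^ 2‖
          ≤ ‖A0 + A1 * lam‖ + ‖A2 * lam ^ 2‖ :=
            norm_add_le _ _
        _ ≤ ‖A0‖ + ‖A1 * lam‖ + ‖A2 * lam ^ 2‖ :=
            add_le_add_left (norm_add_le _ _) _
        _ = ‖A0‖ + ‖A1‖ + ‖A2‖ := by
            rw [norm_mul, norm_mul, norm_pow, h1]; ring
    linarith
  have hA0nn := norm_nonneg A0
  have hA2nn := norm_nonneg A2
  have h1A1 : ‖A0‖ + ‖A2‖ < ‖1 - A1‖ := by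
    have hs : ‖(1 : ℂ)‖ - ‖A1‖ ≤ ‖1 - A1‖ :=
      norm_sub_norm_le 1 A1
    rw [norm_one] at hs
    linarith
  refine ⟨hcirc, ?_⟩
  by_cases hA2 : A2 = 0
  · have hne : (1 : ℂ) - A1 ≠ 0 := by
      intro h
      rw [sub_eq_zero] at h
      rw [← h] at h1A1
      simp [hA2] at h1A1
      linarith
    have habsne : 0 < ‖1 - A1‖ := norm_pos_iff.mpr hne
    constructor
    · refine ⟨A0 / (1 - A1), ⟨?_, ?_⟩, ?_⟩
      · rw [hA2]; field_simp; ring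
      · rw [norm_div, div_lt_one habsne]
        simpa [hA2] using h1A1
      · rintro y ⟨hy, -⟩
        rw [hA2] at hy
        field_simp
        linear_combination -hy
    · intro h; exact absurd hA2 h
  · obtain ⟨s, hs⟩ : ∃ s : ℂ, s ^ 2 = (A1 - 1) ^ 2 - 4 * A2 * A0 :=
      IsAlgClosed.exists_pow_nat_eq _ (n := 2) (by norm_num)
    set L1 := (1 - A1 + s) / (2 * A2) with hL1
    set L2 := (1 - A1 - s) / (2 * A2) with hL2
    have h2A2 : (2 : ℂ) * A2 ≠ 0 := by simp [hA2]
    have e1 : A2 * (L1 + L2) = 1 - A1 := by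
      rw [hL1, hL2]; field_simp; ring
    have e2 : A2 * (L1 * L2) = A0 := by
      rw [hL1, hL2]; field_simp; linear_combination -hs
    have hfact : ∀ lam : ℂ, A2 * lam ^ 2 + (A1 - 1) * lam + A0
        = A2 * (lam - L1) * (lam - L2) := by
      intro lam; linear_combination lam * e1 - e2
    have hr1 : A2 * L1 ^ 2 + (A1 - 1) * L1 + A0 = 0 := by rw [hfact L1]; ring
    have hr2 : A2 * L2 ^ 2 + (A1 - 1) * L2 + A0 = 0 := by rw [hfact L2]; ring
    have hchar : ∀ lam : ℂ, A2 * lam ^ 2 + (A1 - 1) * lam + A0 = 0 →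
        lam = L1 ∨ lam = L2 := by
      intro lam h
      rw [hfact] at h
      rcases mul_eq_zero.mp h with h | h
      · rcases mul_eq_zero.mp h with h | h
        · exact absurd h hA2
        · exact Or.inl (sub_eq_zero.mp h)
      · exact Or.inr (sub_eq_zero.mp h)
    have hL1ne := hcirc L1 hr1
    have hL2ne := hcirc L2 hr2
    have habsA2 : 0 < ‖A2‖ := norm_pos_iff.mpr hA2
    have hbound : ‖1 - A1‖
        ≤ ‖A2‖ * (‖L1‖ + ‖L2‖) := by
      rw [← e1, norm_mul]
      exact mul_le_mul_of_nonneg_left (norm_add_le _ _) hA2nn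
    have hprodabs : ‖A2‖ * (‖L1‖ * ‖L2‖)
        = ‖A0‖ := by
      rw [← e2, norm_mul, norm_mul]
    have hsep : (‖L1‖ - 1) * (‖L2‖ - 1) < 0 := by
      by_contra hcon
      push_neg at hcon
      have hne0 : (‖L1‖ - 1) * (‖L2‖ - 1) ≠ 0 := by
        intro h
        rcases mul_eq_zero.mp h with h | h
        · exact hL1ne (by linarith)
        · exact hL2ne (by linarith)
      have hpos : 0 < (‖L1‖ - 1) * (‖L2‖ - 1) :=
        lt_of_le_of_ne hcon (Ne.symm hne0)
      have hlt : ‖L1‖ + ‖L2‖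
          < ‖L1‖ * ‖L2‖ + 1 := by nlinarith
      have : ‖A2‖ * (‖L1‖ + ‖L2‖)
          < ‖A2‖ * (‖L1‖ * ‖L2‖ + 1) := by
        exact mul_lt_mul_of_pos_left hlt habsA2
      nlinarith
    rcases lt_or_gt_of_ne hL1ne with ha | ha
    · have hb : 1 < ‖L2‖ := by nlinarith
      refine ⟨⟨L1, ⟨hr1, ha⟩, ?_⟩, fun _ => ⟨L2, hr2, hb⟩⟩
      rintro y ⟨hy, hylt⟩
      rcases hchar y hy with h | h
      · exact h
      · rw [h] at hylt; linarith
    · have hb : ‖L2‖ < 1 := by nlinarith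
      refine ⟨⟨L2, ⟨hr2, hb⟩, ?_⟩, fun _ => ⟨L1, hr1, ha⟩⟩
      rintro y ⟨hy, hylt⟩
      rcases hchar y hy with h | h
      · rw [h] at hylt; linarith
      · exact h
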